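/- Let q ≠ 1 and let F be differentiable at x with 1 + (1-q)F(x) > 0. Then lim_{y→x} (ln(exp_q F(x)) - ln(exp_q F(y)))/(x - y) = F'(x)/(1+(1-q)F(x)). -/

import Mathlib

noncomputable def qexp (q t : ℝ) : ℝ := (1 + (1 - q) * t) ^ (1 / (1 - q))

theorem dual_q_deriv_eq (q x f' : ℝ) (F : ℝ → ℝ) (hq : q ≠ 1)
    (hF : HasDerivAt F f' x) (hFx : 0 < 1 + (1 - q) * F x) :
    Filter.Tendsto
      (fun y => (Real.log (qexp q (F x)) - Real.log (qexp q (F y))) / (x - y))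
      (nhdsWithin x {x}ᶜ) (nhds (f' / (1 + (1 - q) * F x))) := by
  have hq' : (1 : ℝ) - q ≠ 0 := sub_ne_zero.mpr (Ne.symm hq)
  set G : ℝ → ℝ := fun y => (1 / (1 - q)) * Real.log (1 + (1 - q) * F y) with hG
  have hGderiv : HasDerivAt G (f' / (1 + (1 - q) * F x)) x := by
    have h1 : HasDerivAt (fun y => 1 + (1 - q) * F y) ((1 - q) * f') x := by
      simpa using ((hF.const_mul (1 - q)).const_add 1)
    have h2 : HasDerivAt (fun y => Real.log (1 + (1 - q) * F y))
        (((1 - q) * f') / (1 + (1 - q) * F x)) x :=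
      by have h := (Real.hasDerivAt_log (ne_of_gt hFx)).comp x h1; exact h.congr_deriv (by ring)
    have h3 := h2.const_mul (1 / (1 - q))
    exact h3.congr_deriv (by symm; rw [one_div, ← mul_div_assoc, ← mul_assoc, inv_mul_cancel₀ hq', one_mul])
  have htend : Filter.Tendsto (fun y => (G y - G x) / (y - x))
      (nhdsWithin x {x}ᶜ) (nhds (f' / (1 + (1 - q) * F x))) := by
    have := hasDerivAt_iff_tendsto_slope.mp hGderiv
    exact Filter.Tendsto.congr (fun y => slope_def_field G x y) this
  have hpos : ∀ᶠ y in nhdsWithin x {x}ᶜ, 0 < 1 + (1 - q) * F y := by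
    have hc : ContinuousAt (fun y => 1 + (1 - q) * F y) x :=
      (continuousAt_const.add (continuousAt_const.mul hF.continuousAt))
    have := continuousAt_const.eventually_lt hc hFx
    exact nhdsWithin_le_nhds this
  refine htend.congr' ?_
  filter_upwards [hpos] with y hy
  have hlog : ∀ z : ℝ, 0 < 1 + (1 - q) * z →
      Real.log (qexp q z) = (1 / (1 - q)) * Real.log (1 + (1 - q) * z) := by
    intro z hz
    rw [qexp, Real.log_rpow hz]
  rw [hlog (F y) hy, hlog (F x) hFx]
  rw [← neg_sub (G x) (G y), ← neg_sub x y, neg_div_neg_eq]
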